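/- Let k, n be positive integers, ŷ_1, …, ŷ_n ∈ ℝ^k arbitrary vectors, and η_1 ≥ η_2 ≥ ⋯ ≥ η_n > 0 a non-increasing sequence of positive reals. For each t ∈ [n] define q_t ∈ ℝ^k by q_{t,a} = exp(−η_t Σ_{s=1}^{t−1} ŷ_{s,a}) / Σ_{b=1}^k exp(−η_t Σ_{s=1}^{t−1} ŷ_{s,b}). Then for every a* ∈ [k], Σ_{t=1}^n Σ_{a=1}^k q_{t,a} (ŷ_{t,a} − ŷ_{t,a*}) ≤ log(k)/η_n + Σ_{t=1}^n Ψ_{q_t}(η_t ŷ_t)/η_t. -/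

import Mathlib

noncomputable def Lc {n k : ℕ} (y : Fin n → Fin k → ℝ) (t : ℕ) (a : Fin k) : ℝ :=
  ∑ s ∈ Finset.univ.filter (fun s : Fin n => (s : ℕ) < t), y s a

lemma Lc_zero {n k : ℕ} (y : Fin n → Fin k → ℝ) (a : Fin k) : Lc y 0 a = 0 := by
  simp [Lc]

lemma Lc_succ {n k : ℕ} (y : Fin n → Fin k → ℝ) {t : ℕ} (ht : t < n) (a : Fin k) :
    Lc y (t + 1) a = Lc y t a + y ⟨t, ht⟩ a := by
  have hset : Finset.univ.filter (fun s : Fin n => (s : ℕ) < t + 1)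
      = insert (⟨t, ht⟩ : Fin n) (Finset.univ.filter (fun s : Fin n => (s : ℕ) < t)) := by
    ext s
    simp [Fin.ext_iff]
    omega
  unfold Lc
  rw [hset, Finset.sum_insert (by simp)]
  ring

lemma Lc_n {n k : ℕ} (y : Fin n → Fin k → ℝ) (a : Fin k) :
    Lc y n a = ∑ s, y s a := by
  unfold Lc
  congr 1
  ext s
  simp [s.isLt]

noncomputable def etaE {n : ℕ} (hn : 0 < n) (η : Fin n → ℝ) (t : ℕ) : ℝ :=
  if h : t < n then η ⟨t, h⟩ else η ⟨n - 1, by omega⟩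

noncomputable def Gf {n k : ℕ} (hn : 0 < n) (y : Fin n → Fin k → ℝ) (η : Fin n → ℝ) (t : ℕ) : ℝ :=
  (Real.log (∑ a, Real.exp (-(etaE hn η t * Lc y t a))) - Real.log k) / etaE hn η t

lemma softmax_mono {k : ℕ} (hk : 0 < k) (x : Fin k → ℝ) {η' η : ℝ}
    (h0 : 0 < η') (h : η' ≤ η) :
    (Real.log (∑ a, Real.exp (η' * x a)) - Real.log k) / η'
      ≤ (Real.log (∑ a, Real.exp (η * x a)) - Real.log k) / η := by
  have hη : 0 < η := lt_of_lt_of_le h0 h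
  have hp : (1:ℝ) ≤ η / η' := (one_le_div h0).2 h
  have hkR : (0:ℝ) < k := by exact_mod_cast hk
  have hne : (Finset.univ : Finset (Fin k)).Nonempty := Finset.univ_nonempty_iff.2 ⟨⟨0, hk⟩⟩
  have key := Real.arith_mean_le_rpow_mean Finset.univ (fun _ => (k:ℝ)⁻¹)
      (fun a => Real.exp (η' * x a)) (fun i _ => by positivity)
      (by simp [Finset.card_univ]; field_simp) (fun i _ => (Real.exp_pos _).le) hp
  have hzp : ∀ a : Fin k, Real.exp (η' * x a) ^ (η / η') = Real.exp (η * x a) := by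
    intro a
    rw [← Real.exp_mul]
    congr 1
    field_simp
  simp only [hzp] at key
  have hS : (0:ℝ) < ∑ a, (k:ℝ)⁻¹ * Real.exp (η * x a) :=
    Finset.sum_pos (fun i _ => by positivity) hne
  have hS' : (0:ℝ) < ∑ a, (k:ℝ)⁻¹ * Real.exp (η' * x a) :=
    Finset.sum_pos (fun i _ => by positivity) hne
  have hlog : Real.log (∑ a, (k:ℝ)⁻¹ * Real.exp (η' * x a))
      ≤ (η' / η) * Real.log (∑ a, (k:ℝ)⁻¹ * Real.exp (η * x a)) := by
    calc Real.log (∑ a, (k:ℝ)⁻¹ * Real.exp (η' * x a))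
        ≤ Real.log ((∑ a, (k:ℝ)⁻¹ * Real.exp (η * x a)) ^ (1 / (η/η'))) :=
          Real.log_le_log hS' key
      _ = (1/(η/η')) * Real.log (∑ a, (k:ℝ)⁻¹ * Real.exp (η * x a)) := Real.log_rpow hS _
      _ = (η' / η) * Real.log (∑ a, (k:ℝ)⁻¹ * Real.exp (η * x a)) := by
          rw [one_div_div]
  have hrw : ∀ (c : ℝ), Real.log (∑ a, (k:ℝ)⁻¹ * Real.exp (c * x a))
      = Real.log (∑ a, Real.exp (c * x a)) - Real.log k := by
    intro c
    rw [← Finset.mul_sum, Real.log_mul (by positivity)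
      (ne_of_gt (Finset.sum_pos (fun i _ => Real.exp_pos _) hne)), Real.log_inv]
    ring
  rw [hrw, hrw] at hlog
  rw [div_le_div_iff₀ h0 hη]
  have := mul_le_mul_of_nonneg_right hlog (le_of_lt hη)
  calc (Real.log (∑ a, Real.exp (η' * x a)) - Real.log k) * η
      ≤ (η' / η) * (Real.log (∑ a, Real.exp (η * x a)) - Real.log k) * η := this
    _ = (Real.log (∑ a, Real.exp (η * x a)) - Real.log k) * η' := by
        field_simp

lemma etaE_pos {n : ℕ} (hn : 0 < n) (η : Fin n → ℝ) (hpos : ∀ t, 0 < η t) (t : ℕ) :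
    0 < etaE hn η t := by
  unfold etaE; split <;> exact hpos _

lemma etaE_succ_le {n : ℕ} (hn : 0 < n) (η : Fin n → ℝ)
    (hmono : ∀ s t : Fin n, s ≤ t → η t ≤ η s) {t : ℕ} (ht : t < n) :
    etaE hn η (t + 1) ≤ etaE hn η t := by
  unfold etaE
  rw [dif_pos ht]
  by_cases h : t + 1 < n
  · rw [dif_pos h]
    exact hmono ⟨t, ht⟩ ⟨t + 1, h⟩ (by simp [Fin.le_def])
  · rw [dif_neg h]
    have : t = n - 1 := by omega
    subst this
    exact le_of_eq rfl

/-- `Ψ_q(z) = ∑_a q_a (exp(-z_a) + z_a - 1)`. -/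
noncomputable def Psi {k : ℕ} (q z : Fin k → ℝ) : ℝ :=
  ∑ a, q a * (Real.exp (-z a) + z a - 1)

lemma step_ineq {k n : ℕ} (hk : 0 < k) (hn : 0 < n)
    (y : Fin n → Fin k → ℝ) (η : Fin n → ℝ)
    (hpos : ∀ t, 0 < η t) (hmono : ∀ s t : Fin n, s ≤ t → η t ≤ η s)
    (q : Fin n → Fin k → ℝ)
    (hq : ∀ t a, q t a =
      Real.exp (-(η t * ∑ s ∈ Finset.univ.filter (fun s => s < t), y s a)) /
        ∑ b, Real.exp (-(η t * ∑ s ∈ Finset.univ.filter (fun s => s < t), y s b)))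
    {t : ℕ} (ht : t < n) :
    ∑ a, q ⟨t, ht⟩ a * y ⟨t, ht⟩ a
      ≤ Psi (q ⟨t, ht⟩) (fun a => η ⟨t, ht⟩ * y ⟨t, ht⟩ a) / η ⟨t, ht⟩
        + (Gf hn y η t - Gf hn y η (t + 1)) := by
  set tt : Fin n := ⟨t, ht⟩ with htt
  set e : ℝ := η tt with hee
  have he : 0 < e := hpos tt
  have hne : (Finset.univ : Finset (Fin k)).Nonempty := Finset.univ_nonempty_iff.2 ⟨⟨0, hk⟩⟩
  set Z : ℝ := ∑ b, Real.exp (-(e * Lc y t b)) with hZdef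
  set Z' : ℝ := ∑ b, Real.exp (-(e * Lc y (t + 1) b)) with hZ'def
  have hZ : 0 < Z := Finset.sum_pos (fun i _ => Real.exp_pos _) hne
  have hZ' : 0 < Z' := Finset.sum_pos (fun i _ => Real.exp_pos _) hne
  have hfil : ∀ a, (∑ s ∈ Finset.univ.filter (fun s => s < tt), y s a) = Lc y t a := by
    intro a; rfl
  have hqL : ∀ a, q tt a = Real.exp (-(e * Lc y t a)) / Z := by
    intro a; rw [hq tt a]; simp only [hfil, ← hee, ← hZdef]
  have hqsum : ∑ a, q tt a = 1 := by
    simp only [hqL]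
    rw [← Finset.sum_div, ← hZdef, div_self hZ.ne']
  have key1 : ∑ a, q tt a * Real.exp (-(e * y tt a)) = Z' / Z := by
    rw [hZ'def, Finset.sum_div]
    refine Finset.sum_congr rfl fun a _ => ?_
    rw [hqL a, Lc_succ y ht a, div_mul_eq_mul_div, ← Real.exp_add]
    congr 2
    ring
  have key2 : Real.log Z' - Real.log Z ≤ Z' / Z - 1 := by
    have := Real.log_le_sub_one_of_pos (show (0:ℝ) < Z' / Z by positivity)
    rwa [Real.log_div hZ'.ne' hZ.ne'] at this
  have hPsi : Psi (q tt) (fun a => e * y tt a)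
      = Z' / Z + e * (∑ a, q tt a * y tt a) - 1 := by
    unfold Psi
    have hterm : ∀ a : Fin k, q tt a * (Real.exp (-(e * y tt a)) + e * y tt a - 1)
        = q tt a * Real.exp (-(e * y tt a)) + e * (q tt a * y tt a) - q tt a := by
      intro a; ring
    simp only [hterm]
    rw [Finset.sum_sub_distrib, Finset.sum_add_distrib, key1, ← Finset.mul_sum, hqsum]
  have hG1 : Gf hn y η t = (Real.log Z - Real.log k) / e := by
    unfold Gf etaE
    rw [dif_pos ht]
  have hG2 : Gf hn y η (t + 1) ≤ (Real.log Z' - Real.log k) / e := by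
    have hmle := etaE_succ_le hn η hmono ht
    have h2 : etaE hn η t = e := by unfold etaE; rw [dif_pos ht]
    rw [h2] at hmle
    have := softmax_mono hk (fun a => -Lc y (t + 1) a)
      (etaE_pos hn η hpos (t + 1)) hmle
    unfold Gf
    rw [hZ'def]
    simp only [mul_neg] at this
    exact this
  have main : ∑ a, q tt a * y tt a
      ≤ Psi (q tt) (fun a => e * y tt a) / e + (Real.log Z - Real.log Z') / e := by
    rw [← add_div, le_div_iff₀ he]
    nlinarith [key2, hPsi]
  have hGdiff : (Real.log Z - Real.log Z') / e ≤ Gf hn y η t - Gf hn y η (t + 1) := by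
    rw [hG1]
    have : (Real.log Z - Real.log Z') / e
        = (Real.log Z - Real.log k) / e - (Real.log Z' - Real.log k) / e := by ring
    rw [this]
    linarith [hG2]
  linarith [main, hGdiff]

lemma Gf_zero {n k : ℕ} (hn : 0 < n) (y : Fin n → Fin k → ℝ) (η : Fin n → ℝ) :
    Gf hn y η 0 = (0:ℝ) := by
  unfold Gf
  simp [Lc_zero, Finset.card_univ]

lemma Gf_n_ge {n k : ℕ} (hk : 0 < k) (hn : 0 < n) (y : Fin n → Fin k → ℝ) (η : Fin n → ℝ)
    (hpos : ∀ t, 0 < η t) (astar : Fin k) :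
    -(Lc y n astar) - Real.log k / etaE hn η n ≤ Gf hn y η n := by
  have he : 0 < etaE hn η n := etaE_pos hn η hpos n
  have hsingle : Real.exp (-(etaE hn η n * Lc y n astar))
      ≤ ∑ b, Real.exp (-(etaE hn η n * Lc y n b)) :=
    Finset.single_le_sum (f := fun b => Real.exp (-(etaE hn η n * Lc y n b)))
      (fun i _ => (Real.exp_pos _).le) (Finset.mem_univ astar)
  have hlog : -(etaE hn η n * Lc y n astar)
      ≤ Real.log (∑ b, Real.exp (-(etaE hn η n * Lc y n b))) := by
    have := Real.log_le_log (Real.exp_pos _) hsingle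
    rwa [Real.log_exp] at this
  unfold Gf
  rw [le_div_iff₀ he]
  have h2 : (-(Lc y n astar) - Real.log (k:ℝ) / etaE hn η n) * etaE hn η n
      = -(etaE hn η n * Lc y n astar) - Real.log (k:ℝ) := by
    field_simp
  rw [h2]
  linarith [hlog]

theorem stmt1 (k n : ℕ) (hk : 0 < k) (hn : 0 < n)
    (y : Fin n → Fin k → ℝ) (η : Fin n → ℝ)
    (hpos : ∀ t, 0 < η t) (hmono : ∀ s t : Fin n, s ≤ t → η t ≤ η s)
    (q : Fin n → Fin k → ℝ)
    (hq : ∀ t a, q t a =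
      Real.exp (-(η t * ∑ s ∈ Finset.univ.filter (fun s => s < t), y s a)) /
        ∑ b, Real.exp (-(η t * ∑ s ∈ Finset.univ.filter (fun s => s < t), y s b)))
    (astar : Fin k) :
    ∑ t, ∑ a, q t a * (y t a - y t astar)
      ≤ Real.log k / η ⟨n - 1, by omega⟩
        + ∑ t, Psi (q t) (fun a => η t * y t a) / η t := by
  have hne : (Finset.univ : Finset (Fin k)).Nonempty := Finset.univ_nonempty_iff.2 ⟨⟨0, hk⟩⟩
  have hqsum : ∀ t : Fin n, ∑ a, q t a = 1 := by
    intro t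
    have hZ : 0 < ∑ b, Real.exp (-(η t * ∑ s ∈ Finset.univ.filter (fun s => s < t), y s b)) :=
      Finset.sum_pos (fun i _ => Real.exp_pos _) hne
    simp only [hq t]
    rw [← Finset.sum_div, div_self hZ.ne']
  have hL : ∑ t, ∑ a, q t a * (y t a - y t astar)
      = (∑ t : Fin n, ∑ a, q t a * y t a) - ∑ t, y t astar := by
    rw [← Finset.sum_sub_distrib]
    refine Finset.sum_congr rfl fun t _ => ?_
    have h1 : ∑ a, q t a * (y t a - y t astar)
        = (∑ a, q t a * y t a) - (∑ a, q t a) * y t astar := by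
      simp only [mul_sub]
      rw [Finset.sum_sub_distrib, ← Finset.sum_mul]
    rw [h1, hqsum t, one_mul]
  have hstep : ∀ t : Fin n, ∑ a, q t a * y t a
      ≤ Psi (q t) (fun a => η t * y t a) / η t
        + (Gf hn y η t.val - Gf hn y η (t.val + 1)) := by
    intro t
    have := step_ineq hk hn y η hpos hmono q hq t.isLt
    simpa using this
  have hsum1 : ∑ t : Fin n, (Gf hn y η t.val - Gf hn y η (t.val + 1))
      = Gf hn y η 0 - Gf hn y η n := by
    rw [Fin.sum_univ_eq_sum_range (fun i => Gf hn y η i - Gf hn y η (i + 1)) n]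
    exact Finset.sum_range_sub' _ n
  have hGn := Gf_n_ge hk hn y η hpos astar
  have hetan : etaE hn η n = η ⟨n - 1, by omega⟩ := by
    unfold etaE; rw [dif_neg (lt_irrefl n)]
  have hLcn : Lc y n astar = ∑ s, y s astar := Lc_n y astar
  rw [hetan, hLcn] at hGn
  calc ∑ t, ∑ a, q t a * (y t a - y t astar)
      = (∑ t : Fin n, ∑ a, q t a * y t a) - ∑ t, y t astar := hL
    _ ≤ (∑ t : Fin n, (Psi (q t) (fun a => η t * y t a) / η t
          + (Gf hn y η t.val - Gf hn y η (t.val + 1)))) - ∑ t, y t astar :=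
        sub_le_sub_right (Finset.sum_le_sum fun t _ => hstep t) _
    _ = (∑ t, Psi (q t) (fun a => η t * y t a) / η t)
          + (Gf hn y η 0 - Gf hn y η n) - ∑ t, y t astar := by
        rw [Finset.sum_add_distrib, hsum1]
    _ ≤ Real.log k / η ⟨n - 1, by omega⟩
        + ∑ t, Psi (q t) (fun a => η t * y t a) / η t := by
        rw [Gf_zero]
        linarith [hGn]
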